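/- If P is a pointer list of length greater than 4, then P is not simultaneously a fixed point of cde, cdr, and cds; that is, at least one of cde(P) ≠ P, cdr(P) ≠ P, cds(P) ≠ P holds. -/

import Mathlib

/-- A finite sequence of integers (0-indexed list) is a *pointer list*:
(1) even positive length; (2) unique index of minimum absolute value;
(3) unique index of maximum absolute value; (4) each intermediate absolute
value occurs at exactly one other index; (5) for each even (0-based) index i,
x i ≤ x (i+1) and x i * x (i+1) > 0; (6) for each even (0-based) index i no
entry has absolute value strictly between |x i| and |x (i+1)|. -/
def IsPointerList (P : List ℤ) : Prop :=
  P.length % 2 = 0 ∧ 0 < P.length ∧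
  (∃! i, i < P.length ∧ ∀ j < P.length, |P.getD i 0| ≤ |P.getD j 0|) ∧
  (∃! i, i < P.length ∧ ∀ j < P.length, |P.getD j 0| ≤ |P.getD i 0|) ∧
  (∀ i < P.length, (∃ j < P.length, |P.getD j 0| < |P.getD i 0|) →
      (∃ j < P.length, |P.getD i 0| < |P.getD j 0|) →
      ∃! j, j < P.length ∧ j ≠ i ∧ |P.getD j 0| = |P.getD i 0|) ∧
  (∀ i, i % 2 = 0 → i + 1 < P.length →
      P.getD i 0 ≤ P.getD (i+1) 0 ∧ 0 < P.getD i 0 * P.getD (i+1) 0) ∧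
  (∀ i, i % 2 = 0 → i + 1 < P.length →
      ¬ ∃ j < P.length,
        (|P.getD i 0| < |P.getD j 0| ∧ |P.getD j 0| < |P.getD (i+1) 0|) ∨
        (|P.getD (i+1) 0| < |P.getD j 0| ∧ |P.getD j 0| < |P.getD i 0|))

-- Context directed excision: delete the first adjacent equal pair, if any.
open Classical in
noncomputable def cde (P : List ℤ) : List ℤ :=
  if h : ∃ i, i + 1 < P.length ∧ P.getD i 0 = P.getD (i+1) 0 then
    P.take (Nat.find h) ++ P.drop (Nat.find h + 2)
  else P

-- Context directed reversal: for the minimal i admitting j > i with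
-- x i = -(x j) (and the minimal such j), reverse and negate the segment
-- from position i+1 through j.
open Classical in
noncomputable def cdr (P : List ℤ) : List ℤ :=
  if h : ∃ i, ∃ j, i < j ∧ j < P.length ∧ P.getD i 0 = -(P.getD j 0) then
    let i := Nat.find h
    let j := Nat.find (Nat.find_spec h)
    P.take (i+1) ++ (((P.drop (i+1)).take (j - i)).reverse.map (fun z => -z)) ++
      P.drop (j+1)
  else P

-- Context directed block swap: for the lexicographically least (i, j)
-- admitting k, ℓ with i < j < k < ℓ, x i = x k, x j = x ℓ, interchange
-- the blocks x_{i+1}..x_{j-1} and x_k..x_ℓ.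
open Classical in
noncomputable def cds (P : List ℤ) : List ℤ :=
  if h : ∃ i, ∃ j, ∃ k, ∃ l, i < j ∧ j < k ∧ k < l ∧ l < P.length ∧
      P.getD i 0 = P.getD k 0 ∧ P.getD j 0 = P.getD l 0 then
    let i := Nat.find h
    let j := Nat.find (Nat.find_spec h)
    let k := Nat.find (Nat.find_spec (Nat.find_spec h))
    let l := Nat.find (Nat.find_spec (Nat.find_spec (Nat.find_spec h)))
    P.take (i+1) ++ ((P.drop k).take (l - k + 1)) ++ ((P.drop j).take (k - j)) ++
      ((P.drop (i+1)).take (j - i - 1)) ++ P.drop (l+1)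
  else P

/-- The doubling map π: each entry z is replaced by (z, z+1) if z > 0
and by (z-1, z) if z < 0. -/
def piMap (M : List ℤ) : List ℤ :=
  M.flatMap (fun z => if 0 < z then [z, z + 1] else [z - 1, z])

/-- One step of the HNS algorithm: apply cde if applicable, else cds if
applicable, else cdr. -/
noncomputable def hnsStep (P : List ℤ) : List ℤ :=
  if cde P ≠ P then cde P else if cds P ≠ P then cds P else cdr P


lemma find_irrel {p : ℕ → Prop} (h : ∃ n, p n) (i1 i2 : DecidablePred p) :
    @Nat.find p i1 h = @Nat.find p i2 h := by congr!

open Classical in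
lemma N1_of_cde (P : List ℤ) (h : cde P = P) :
    ∀ i, i + 1 < P.length → P.getD i 0 ≠ P.getD (i+1) 0 := by
  intro i hi heq
  have hex : ∃ i, i + 1 < P.length ∧ P.getD i 0 = P.getD (i+1) 0 := ⟨i, hi, heq⟩
  rw [cde, dif_pos hex] at h
  rw [find_irrel hex _ (fun n => Classical.dec _)] at h
  have hk := @Nat.find_spec _ (fun n => Classical.dec _) hex
  have hlen := congrArg List.length h
  simp only [List.length_append, List.length_take, List.length_drop] at hlen
  omega


lemma key_cdr (P : List ℤ) (hN1 : ∀ i, i + 1 < P.length → P.getD i 0 ≠ P.getD (i+1) 0)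
    (I J : ℕ) (h1 : I < J) (h2 : J < P.length) (h3 : P.getD I 0 = -P.getD J 0)
    (h : P.take (I+1) ++ (((P.drop (I+1)).take (J - I)).reverse.map (fun z => -z)) ++
      P.drop (J+1) = P) : False := by
  have hlt : I + 1 < P.length := by omega
  have hpf : I + 1 < (P.take (I+1) ++ (((P.drop (I+1)).take (J - I)).reverse.map (fun z : ℤ => -z)) ++ P.drop (J+1)).length := by
    rw [h]; exact hlt
  have e2 : (P.take (I+1) ++ (((P.drop (I+1)).take (J - I)).reverse.map (fun z : ℤ => -z)) ++ P.drop (J+1)).getD (I+1) 0 = P.getD (I+1) 0 := by rw [h]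
  have e1 : (P.take (I+1) ++ (((P.drop (I+1)).take (J - I)).reverse.map (fun z : ℤ => -z)) ++ P.drop (J+1)).getD (I+1) 0 = -P.getD J 0 := by
    rw [List.getD_eq_getElem _ _ hpf]
    rw [List.getElem_append_left (by
      simp only [List.length_append, List.length_take, List.length_map, List.length_reverse, List.length_drop]; omega)]
    rw [List.getElem_append_right (by simp only [List.length_take]; omega)]
    simp only [List.getElem_map, List.getElem_reverse, List.getElem_take, List.getElem_drop]
    have hc : (I + 1) + (((P.drop (I+1)).take (J - I)).length - 1 - ((I+1) - (P.take (I+1)).length)) = J := by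
      simp only [List.length_take, List.length_drop]; omega
    simp only [hc]
    rw [List.getD_eq_getElem _ _ h2]
  rw [e2] at e1
  exact hN1 I hlt (by rw [e1, ← h3])


open Classical in
lemma N2_of_cdr (P : List ℤ) (h : cdr P = P)
    (hN1 : ∀ i, i + 1 < P.length → P.getD i 0 ≠ P.getD (i+1) 0) :
    ∀ i j, i < j → j < P.length → P.getD i 0 ≠ -P.getD j 0 := by
  intro i j hij hj heq
  have hex : ∃ i, ∃ j, i < j ∧ j < P.length ∧ P.getD i 0 = -(P.getD j 0) := ⟨i, j, hij, hj, heq⟩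
  rw [cdr, dif_pos hex] at h
  refine key_cdr P hN1 _ _ ?_ ?_ ?_ h
  · exact (Nat.find_spec (Nat.find_spec hex)).1
  · exact (Nat.find_spec (Nat.find_spec hex)).2.1
  · exact (Nat.find_spec (Nat.find_spec hex)).2.2

lemma key_cds (P : List ℤ) (hN1 : ∀ i, i + 1 < P.length → P.getD i 0 ≠ P.getD (i+1) 0)
    (I J K L : ℕ) (h1 : I < J) (h2 : J < K) (h3 : K < L) (h4 : L < P.length)
    (h5 : P.getD I 0 = P.getD K 0)
    (h : P.take (I+1) ++ ((P.drop K).take (L - K + 1)) ++ ((P.drop J).take (K - J)) ++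
      ((P.drop (I+1)).take (J - I - 1)) ++ P.drop (L+1) = P) : False := by
  have hlt : I + 1 < P.length := by omega
  have hpf : I + 1 < (P.take (I+1) ++ ((P.drop K).take (L - K + 1)) ++ ((P.drop J).take (K - J)) ++
      ((P.drop (I+1)).take (J - I - 1)) ++ P.drop (L+1)).length := by rw [h]; exact hlt
  have e2 : (P.take (I+1) ++ ((P.drop K).take (L - K + 1)) ++ ((P.drop J).take (K - J)) ++
      ((P.drop (I+1)).take (J - I - 1)) ++ P.drop (L+1)).getD (I+1) 0 = P.getD (I+1) 0 := by rw [h]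
  have e1 : (P.take (I+1) ++ ((P.drop K).take (L - K + 1)) ++ ((P.drop J).take (K - J)) ++
      ((P.drop (I+1)).take (J - I - 1)) ++ P.drop (L+1)).getD (I+1) 0 = P.getD K 0 := by
    rw [List.getD_eq_getElem _ _ hpf]
    rw [List.getElem_append_left (by
      simp only [List.length_append, List.length_take, List.length_drop]; omega)]
    rw [List.getElem_append_left (by
      simp only [List.length_append, List.length_take, List.length_drop]; omega)]
    rw [List.getElem_append_left (by
      simp only [List.length_append, List.length_take, List.length_drop]; omega)]
    rw [List.getElem_append_right (by simp only [List.length_take]; omega)]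
    simp only [List.getElem_take, List.getElem_drop]
    have hc : K + ((I + 1) - (P.take (I+1)).length) = K := by
      simp only [List.length_take]; omega
    simp only [hc]
    rw [List.getD_eq_getElem _ _ (by omega : K < P.length)]
  rw [e2] at e1
  exact hN1 I hlt (by rw [e1, ← h5])

open Classical in
lemma N3_of_cds (P : List ℤ) (h : cds P = P)
    (hN1 : ∀ i, i + 1 < P.length → P.getD i 0 ≠ P.getD (i+1) 0) :
    ∀ i j k l, i < j → j < k → k < l → l < P.length →
      ¬(P.getD i 0 = P.getD k 0 ∧ P.getD j 0 = P.getD l 0) := by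
  intro i j k l hij hjk hkl hl ⟨e1, e2⟩
  have hex : ∃ i, ∃ j, ∃ k, ∃ l', i < j ∧ j < k ∧ k < l' ∧ l' < P.length ∧
      P.getD i 0 = P.getD k 0 ∧ P.getD j 0 = P.getD l' 0 := ⟨i, j, k, l, hij, hjk, hkl, hl, e1, e2⟩
  rw [cds, dif_pos hex] at h
  refine key_cds P hN1 _ _ _ _ ?_ ?_ ?_ ?_ ?_ h
  · exact (Nat.find_spec (Nat.find_spec (Nat.find_spec (Nat.find_spec hex)))).1
  · exact (Nat.find_spec (Nat.find_spec (Nat.find_spec (Nat.find_spec hex)))).2.1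
  · exact (Nat.find_spec (Nat.find_spec (Nat.find_spec (Nat.find_spec hex)))).2.2.1
  · exact (Nat.find_spec (Nat.find_spec (Nat.find_spec (Nat.find_spec hex)))).2.2.2.1
  · exact (Nat.find_spec (Nat.find_spec (Nat.find_spec (Nat.find_spec hex)))).2.2.2.2.1


def Btwn (a b x : ℕ) : Prop := (a < x ∧ x < b) ∨ (b < x ∧ x < a)

lemma core (n : ℕ) (lo hi : ℕ → ℕ) (hn : 3 ≤ n)
    (h1 : ∀ p, p < n → lo p < hi p)
    (h2a : ∀ p q, p < n → q < n → ¬(lo p < lo q ∧ lo q < hi p))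
    (h3 : ∀ p q, p < n → q < n → lo p = lo q → p = q)
    (h4 : ∀ p q, p < n → q < n → hi p = hi q → p = q)
    (h5 : ∀ p, p < n → (∃ q, q < n ∧ hi p < hi q) → ∃ q, q < n ∧ lo q = hi p)
    (h6 : ∀ q, q < n → (∃ p, p < n ∧ lo p < lo q) → ∃ p, p < n ∧ lo q = hi p)
    (h7 : ∀ p, p + 1 < n → lo (p+1) ≠ hi p)
    (h8 : ∀ p q p' q', p < n → q < n → p' < n → q' < n → lo q = hi p → lo q' = hi p' →
       hi p ≠ hi p' → (Btwn (2*p+1) (2*q) (2*p'+1) ↔ Btwn (2*p+1) (2*q) (2*q'))) :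
    False := by
  have key : ∀ d p q, p < n → q < n → lo q = hi p → p + d = q → d < 2 := by
    intro d
    induction d using Nat.strong_induction_on with
    | _ d IH =>
    intro p q hp hq hlink hd
    by_contra hd2
    push_neg at hd2
    set w := p + 1 with hwdef
    have hw : w < n := by omega
    by_cases hBmax : ∃ u, u < n ∧ hi w < hi u
    · obtain ⟨q', hq', hlq'⟩ := h5 w hw hBmax
      have hne : hi p ≠ hi w := fun hh => by have := h4 p w hp hw hh; omega
      have hbtw2 : Btwn (2*p+1) (2*q) (2*q') :=
        (h8 p q w q' hp hq hw hq' hlink hlq' hne).mp (Or.inl ⟨by omega, by omega⟩)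
      have hq'w : q' ≠ w := fun hh => by
        rw [hh] at hlq'; have := h1 w hw; omega
      have hr : p + 2 ≤ q' ∧ q' ≤ q - 1 := by
        rcases hbtw2 with ⟨ha, hb⟩ | ⟨ha, hb⟩ <;> omega
      have hsmall := IH (q' - w) (by omega) w q' hw hq' hlq' (by omega)
      have hq's : w + 1 = q' := by omega
      exact h7 w (by omega) (by rw [hq's]; exact hlq')
    · by_cases hBmin : ∃ u, u < n ∧ lo u < lo w
      · obtain ⟨p2, hp2, hhp2⟩ := h6 w hw hBmin
        have hne : hi p ≠ hi p2 := by
          intro hh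
          have hpp : p = p2 := h4 p p2 hp hp2 hh
          rw [← hpp] at hhp2
          have : w = q := h3 w q hw hq (by rw [hhp2, ← hlink])
          omega
        have hbtw2 : Btwn (2*p+1) (2*q) (2*p2+1) :=
          (h8 p q p2 w hp hq hp2 hw hlink hhp2 hne).mpr (Or.inl ⟨by omega, by omega⟩)
        have hp2w : p2 ≠ w := fun hh => by rw [hh] at hhp2; have := h1 w hw; omega
        have hr : p + 2 ≤ p2 ∧ p2 ≤ q - 1 := by
          rcases hbtw2 with ⟨ha, hb⟩ | ⟨ha, hb⟩ <;> omega
        by_cases hBmin2 : ∃ u, u < n ∧ lo u < lo p2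
        · obtain ⟨p3, hp3, hhp3⟩ := h6 p2 hp2 hBmin2
          have hne2 : hi p2 ≠ hi p3 := by
            intro hh
            have : p2 = p3 := h4 p2 p3 hp2 hp3 hh
            rw [← this] at hhp3
            have := h1 p2 hp2; omega
          have hbtw3 : Btwn (2*p2+1) (2*w) (2*p3+1) :=
            (h8 p2 w p3 p2 hp2 hw hp3 hp2 hhp2 hhp3 hne2).mpr
              (Or.inr ⟨by omega, by omega⟩)
          have hp3w : p3 ≠ w := by
            intro hh
            rw [hh] at hhp3
            have hle : hi p2 ≤ hi w := by
              by_contra hcc; exact hBmax ⟨p2, hp2, by omega⟩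
            have := h1 p2 hp2; omega
          have hr3 : p + 2 ≤ p3 ∧ p3 < p2 := by
            rcases hbtw3 with ⟨ha, hb⟩ | ⟨ha, hb⟩ <;> omega
          have hsm := IH (p2 - p3) (by omega) p3 p2 hp3 hp2 hhp3 (by omega)
          have hp3s : p3 + 1 = p2 := by omega
          exact h7 p3 (by omega) (by rw [hp3s]; exact hhp3)
        · obtain ⟨u, hu, huw, hup2⟩ : ∃ u, u < n ∧ u ≠ w ∧ u ≠ p2 := by
            by_cases c0 : 0 ≠ w ∧ 0 ≠ p2
            · exact ⟨0, by omega, c0.1, c0.2⟩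
            · by_cases c1 : 1 ≠ w ∧ 1 ≠ p2
              · exact ⟨1, by omega, c1.1, c1.2⟩
              · exact ⟨2, by omega, by omega, by omega⟩
          have d1 : lo p2 < lo u := by
            have hle : lo p2 ≤ lo u := by
              by_contra hcc; exact hBmin2 ⟨u, hu, by omega⟩
            have : lo u ≠ lo p2 := fun hh => hup2 (h3 u p2 hu hp2 hh)
            omega
          have d2 : lo w < lo u := by
            have hb := h2a p2 u hp2 hu
            have hne3 : lo u ≠ lo w := fun hh => huw (h3 u w hu hw hh)
            rw [← hhp2] at hb
            omega
          have d3 : hi w ≤ lo u := by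
            have := h2a w u hw hu; omega
          have d4 : hi u ≤ hi w := by
            by_contra hcc; exact hBmax ⟨u, hu, by omega⟩
          have := h1 u hu; omega
      · obtain ⟨u, hu, huw⟩ : ∃ u, u < n ∧ u ≠ w := by
          refine ⟨if w = 0 then 1 else 0, ?_, ?_⟩ <;> split <;> omega
        have d1 : lo w < lo u := by
          have hle : lo w ≤ lo u := by
            by_contra hcc; exact hBmin ⟨u, hu, by omega⟩
          have : lo u ≠ lo w := fun hh => huw (h3 u w hu hw hh)
          omega
        have d3 : hi w ≤ lo u := by have := h2a w u hw hu; omega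
        have d4 : hi u ≤ hi w := by
          by_contra hcc; exact hBmax ⟨u, hu, by omega⟩
        have := h1 u hu; omega
  obtain ⟨w, hw, hlow, hhiw⟩ :
      ∃ w, w < n ∧ (∃ u, u < n ∧ lo u < lo w) ∧ (∃ u, u < n ∧ hi w < hi u) := by
    by_contra hc
    push_neg at hc
    have hprop : ∀ w, w < n → (∀ u, u < n → lo w ≤ lo u) ∨ (∀ u, u < n → hi u ≤ hi w) := by
      intro w hw
      by_cases hA : ∃ u, u < n ∧ lo u < lo w
      · right
        intro u hu
        by_contra hcc
        exact absurd (hc w hw hA u hu) (by omega)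
      · left; intro u hu; by_contra hcc; exact hA ⟨u, hu, by omega⟩
    have hlominj : ∀ a b, a < n → b < n → (∀ u, u < n → lo a ≤ lo u) →
        (∀ u, u < n → lo b ≤ lo u) → a = b := fun a b ha hb hma hmb =>
      h3 a b ha hb (le_antisymm (hma b hb) (hmb a ha))
    have hhimaxj : ∀ a b, a < n → b < n → (∀ u, u < n → hi u ≤ hi a) →
        (∀ u, u < n → hi u ≤ hi b) → a = b := fun a b ha hb hma hmb =>
      h4 a b ha hb (le_antisymm (hmb a ha) (hma b hb))
    rcases hprop 0 (by omega) with H0 | H0 <;>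
      rcases hprop 1 (by omega) with H1 | H1 <;>
        rcases hprop 2 (by omega) with H2 | H2
    · exact absurd (hlominj 0 1 (by omega) (by omega) H0 H1) (by omega)
    · exact absurd (hlominj 0 1 (by omega) (by omega) H0 H1) (by omega)
    · exact absurd (hlominj 0 2 (by omega) (by omega) H0 H2) (by omega)
    · exact absurd (hhimaxj 1 2 (by omega) (by omega) H1 H2) (by omega)
    · exact absurd (hlominj 1 2 (by omega) (by omega) H1 H2) (by omega)
    · exact absurd (hhimaxj 0 2 (by omega) (by omega) H0 H2) (by omega)
    · exact absurd (hhimaxj 0 1 (by omega) (by omega) H0 H1) (by omega)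
    · exact absurd (hhimaxj 0 1 (by omega) (by omega) H0 H1) (by omega)
  obtain ⟨p, hp, hpw⟩ := h6 w hw hlow
  obtain ⟨r, hr, hrw⟩ := h5 w hw hhiw
  have hwp : w < p := by
    rcases lt_trichotomy w p with hh | hh | hh
    · exact hh
    · exfalso; rw [← hh] at hpw; have := h1 w hw; omega
    · exfalso
      have := key (w - p) p w hp hw hpw (by omega)
      have hs : p + 1 = w := by omega
      exact h7 p (by omega) (by rw [hs]; exact hpw)
  have hrww : r < w := by
    rcases lt_trichotomy r w with hh | hh | hh
    · exact hh
    · exfalso; rw [hh] at hrw; have := h1 w hw; omega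
    · exfalso
      have := key (r - w) w r hw hr hrw (by omega)
      have hs : w + 1 = r := by omega
      exact h7 w (by omega) (by rw [hs]; exact hrw)
  have hne : hi p ≠ hi w := fun hh => by have := h4 p w hp hw hh; omega
  have hbtw2 : Btwn (2*p+1) (2*w) (2*r) :=
    (h8 p w w r hp hw hw hr hpw hrw hne).mp (Or.inr ⟨by omega, by omega⟩)
  rcases hbtw2 with ⟨ha, hb⟩ | ⟨ha, hb⟩ <;> omega

lemma habs_lt (a b : ℤ) : a.natAbs < b.natAbs ↔ |a| < |b| := by
  rw [Int.abs_eq_natAbs, Int.abs_eq_natAbs]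
  exact_mod_cast Iff.rfl

lemma habs_eq (a b : ℤ) : a.natAbs = b.natAbs ↔ |a| = |b| := by
  rw [Int.abs_eq_natAbs, Int.abs_eq_natAbs]
  exact_mod_cast Iff.rfl

lemma main (f : ℕ → ℤ) (m : ℕ)
    (hm : 4 < m) (hev : m % 2 = 0)
    (hmin : ∃! i, i < m ∧ ∀ j, j < m → |f i| ≤ |f j|)
    (hmax : ∃! i, i < m ∧ ∀ j, j < m → |f j| ≤ |f i|)
    (htwice : ∀ i, i < m → (∃ j, j < m ∧ |f j| < |f i|) → (∃ j, j < m ∧ |f i| < |f j|) →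
      ∃! j, j < m ∧ j ≠ i ∧ |f j| = |f i|)
    (hpair : ∀ i, i % 2 = 0 → i + 1 < m → f i ≤ f (i+1) ∧ 0 < f i * f (i+1))
    (hbet : ∀ i, i % 2 = 0 → i + 1 < m →
      ¬ ∃ j, j < m ∧ ((|f i| < |f j| ∧ |f j| < |f (i+1)|) ∨
        (|f (i+1)| < |f j| ∧ |f j| < |f i|)))
    (hN1 : ∀ i, i + 1 < m → f i ≠ f (i+1))
    (hN2 : ∀ i j, i < j → j < m → f i ≠ -f j)
    (hN3 : ∀ i j k l, i < j → j < k → k < l → l < m → ¬(f i = f k ∧ f j = f l)) :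
    False := by
  set n := m / 2 with hndef
  have hm2 : m = 2 * n := by omega
  have hn : 3 ≤ n := by omega
  -- block basics
  have hblk : ∀ p, p < n → f (2*p) < f (2*p+1) ∧ 0 < f (2*p) * f (2*p+1) := by
    intro p hp
    have h := hpair (2*p) (by omega) (by omega)
    exact ⟨lt_of_le_of_ne h.1 (hN1 (2*p) (by omega)), h.2⟩
  have hsp : ∀ p, p < n → (0 < f (2*p) ∧ 0 < f (2*p+1)) ∨ (f (2*p) < 0 ∧ f (2*p+1) < 0) := by
    intro p hp
    rcases mul_pos_iff.mp (hblk p hp).2 with h | h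
    · exact Or.inl h
    · exact Or.inr h
  have hnz : ∀ i, i < m → f i ≠ 0 := by
    intro i hi h0
    have hp : i / 2 < n := by omega
    rcases hsp (i/2) hp with ⟨h1, h2⟩ | ⟨h1, h2⟩ <;>
      (have : i = 2*(i/2) ∨ i = 2*(i/2)+1 := by omega) <;>
      rcases this with h | h <;> rw [h] at h0 <;> omega
  have habs : ∀ i j, i < m → j < m → |f i| = |f j| → f i = f j := by
    intro i j hi hj he
    rcases abs_eq_abs.mp he with h | h
    · exact h
    · exfalso
      rcases lt_trichotomy i j with hij | hij | hij
      · exact hN2 i j hij hj h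
      · rw [hij] at h; have := hnz j hj; omega
      · exact hN2 j i hij hi (by omega)
  have hbet' : ∀ p, p < n → ∀ j, j < m →
      ¬((|f (2*p)| < |f j| ∧ |f j| < |f (2*p+1)|) ∨
        (|f (2*p+1)| < |f j| ∧ |f j| < |f (2*p)|)) := by
    intro p hp j hj hcon
    exact hbet (2*p) (by omega) (by omega) ⟨j, hj, hcon⟩
  -- crossing from N3 at block level
  have hLL : ∀ p q, p < q → q < n → f (2*p) = f (2*q) → f (2*p+1) = f (2*q+1) → False := by
    intro p q hpq hq e1 e2
    exact hN3 (2*p) (2*p+1) (2*q) (2*q+1) (by omega) (by omega) (by omega) (by omega) ⟨e1, e2⟩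
  -- lo-lo and hi-hi lemmas, positive and negative versions
  have hLLpos : ∀ p q, p < n → q < n → p ≠ q → 0 < f (2*p) → f (2*p) = f (2*q) → False := by
    intro p q hp hq hne hpos heq
    have hbp := hblk p hp
    have hbq := hblk q hq
    have hp1 : 0 < f (2*p+1) := by rcases hsp p hp with h | h <;> omega
    have hq0 : 0 < f (2*q) := by omega
    have hq1 : 0 < f (2*q+1) := by rcases hsp q hq with h | h <;> omega
    have habs0 : |f (2*p)| = |f (2*q)| := by rw [heq]
    have hup : |f (2*p+1)| = |f (2*q+1)| := by
      rcases lt_trichotomy (|f (2*p+1)|) (|f (2*q+1)|) with hh | hh | hh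
      · exfalso
        refine hbet' q hq (2*p+1) (by omega) (Or.inl ⟨?_, hh⟩)
        rw [← habs0]
        rw [← habs_lt]
        omega
      · exact hh
      · exfalso
        refine hbet' p hp (2*q+1) (by omega) (Or.inl ⟨?_, hh⟩)
        rw [habs0, ← habs_lt]
        omega
    have e2 : f (2*p+1) = f (2*q+1) := habs _ _ (by omega) (by omega) hup
    rcases lt_trichotomy p q with hh | hh | hh
    · exact hLL p q hh hq heq e2
    · exact hne hh
    · exact hLL q p hh hp heq.symm e2.symm
  have hLLneg : ∀ p q, p < n → q < n → p ≠ q → f (2*p+1) < 0 → f (2*p+1) = f (2*q+1) → False := by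
    intro p q hp hq hne hneg heq
    have hbp := hblk p hp
    have hbq := hblk q hq
    have hp0 : f (2*p) < 0 := by rcases hsp p hp with h | h <;> omega
    have hq1 : f (2*q+1) < 0 := by omega
    have hq0 : f (2*q) < 0 := by rcases hsp q hq with h | h <;> omega
    have habs1 : |f (2*p+1)| = |f (2*q+1)| := by rw [heq]
    have hup : |f (2*p)| = |f (2*q)| := by
      rcases lt_trichotomy (|f (2*p)|) (|f (2*q)|) with hh | hh | hh
      · exfalso
        refine hbet' q hq (2*p) (by omega) (Or.inr ⟨?_, hh⟩)
        rw [← habs1, ← habs_lt]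
        omega
      · exact hh
      · exfalso
        refine hbet' p hp (2*q) (by omega) (Or.inr ⟨?_, hh⟩)
        rw [habs1, ← habs_lt]
        omega
    have e1 : f (2*p) = f (2*q) := habs _ _ (by omega) (by omega) hup
    rcases lt_trichotomy p q with hh | hh | hh
    · exact hLL p q hh hq e1 heq
    · exact hne hh
    · exact hLL q p hh hp e1.symm heq.symm
  have hHHpos : ∀ p q, p < n → q < n → p ≠ q → 0 < f (2*p+1) → f (2*p+1) = f (2*q+1) → False := by
    intro p q hp hq hne hpos heq
    have hbp := hblk p hp
    have hbq := hblk q hq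
    have hp0 : 0 < f (2*p) := by rcases hsp p hp with h | h <;> omega
    have hq1 : 0 < f (2*q+1) := by omega
    have hq0 : 0 < f (2*q) := by rcases hsp q hq with h | h <;> omega
    have habs1 : |f (2*p+1)| = |f (2*q+1)| := by rw [heq]
    have hdn : |f (2*p)| = |f (2*q)| := by
      rcases lt_trichotomy (|f (2*p)|) (|f (2*q)|) with hh | hh | hh
      · exfalso
        refine hbet' p hp (2*q) (by omega) (Or.inl ⟨hh, ?_⟩)
        rw [habs1, ← habs_lt]
        omega
      · exact hh
      · exfalso
        refine hbet' q hq (2*p) (by omega) (Or.inl ⟨hh, ?_⟩)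
        rw [← habs1, ← habs_lt]
        omega
    have e1 : f (2*p) = f (2*q) := habs _ _ (by omega) (by omega) hdn
    rcases lt_trichotomy p q with hh | hh | hh
    · exact hLL p q hh hq e1 heq
    · exact hne hh
    · exact hLL q p hh hp e1.symm heq.symm
  have hHHneg : ∀ p q, p < n → q < n → p ≠ q → f (2*p) < 0 → f (2*p) = f (2*q) → False := by
    intro p q hp hq hne hneg heq
    have hbp := hblk p hp
    have hbq := hblk q hq
    have hp1 : f (2*p+1) < 0 := by rcases hsp p hp with h | h <;> omega
    have hq0 : f (2*q) < 0 := by omega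
    have hq1 : f (2*q+1) < 0 := by rcases hsp q hq with h | h <;> omega
    have habs0 : |f (2*p)| = |f (2*q)| := by rw [heq]
    have hdn : |f (2*p+1)| = |f (2*q+1)| := by
      rcases lt_trichotomy (|f (2*p+1)|) (|f (2*q+1)|) with hh | hh | hh
      · exfalso
        refine hbet' p hp (2*q+1) (by omega) (Or.inr ⟨hh, ?_⟩)
        rw [habs0, ← habs_lt]
        omega
      · exact hh
      · exfalso
        refine hbet' q hq (2*p+1) (by omega) (Or.inr ⟨hh, ?_⟩)
        rw [← habs0, ← habs_lt]
        omega
    have e2 : f (2*p+1) = f (2*q+1) := habs _ _ (by omega) (by omega) hdn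
    rcases lt_trichotomy p q with hh | hh | hh
    · exact hLL p q hh hq heq e2
    · exact hne hh
    · exact hLL q p hh hp heq.symm e2.symm
  -- global same sign
  obtain ⟨mu, ⟨hmu1, hmu2⟩, hmu3⟩ := hmin
  have hsign : ∀ v : ℕ, ∀ i, i < m → (f i).natAbs ≤ v → (0 < f i ↔ 0 < f mu) := by
    intro v
    induction v using Nat.strong_induction_on with
    | _ v IH =>
    intro i him hv
    have hp : i / 2 < n := by omega
    set p := i / 2 with hpdef
    have hsppp := hsp p hp
    have hbpp := hblk p hp
    have hic : i = 2*p ∨ i = 2*p+1 := by omega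
    obtain ⟨pa, hpam, hpasign, hpadist, hparole⟩ :
        ∃ pa, pa < m ∧ (0 < f i ↔ 0 < f pa) ∧ pa ≠ i ∧
          ((i = 2*p ∧ pa = 2*p+1) ∨ (i = 2*p+1 ∧ pa = 2*p)) := by
      rcases hic with h | h
      · exact ⟨2*p+1, by omega,
          by rw [h]; constructor <;> intro <;> rcases hsppp with hh | hh <;> omega,
          by omega, Or.inl ⟨h, rfl⟩⟩
      · exact ⟨2*p, by omega,
          by rw [h]; constructor <;> intro <;> rcases hsppp with hh | hh <;> omega,
          by omega, Or.inr ⟨h, rfl⟩⟩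
    have hpane : (f pa).natAbs ≠ (f i).natAbs := by
      intro hh
      have hfe : f pa = f i := habs pa i hpam him ((habs_eq _ _).mp hh)
      rcases hparole with ⟨h1, h2⟩ | ⟨h1, h2⟩
      · exact hN1 (2*p) (by omega) (by rw [← h2, ← h1]; exact hfe.symm)
      · exact hN1 (2*p) (by omega) (by rw [← h1, ← h2]; exact hfe)
    rcases Nat.lt_or_ge (f pa).natAbs (f i).natAbs with hlt | hge
    · have hIH := IH ((f pa).natAbs) (by omega) pa hpam le_rfl
      rw [hpasign]; exact hIH
    · by_cases hismin : ∀ j, j < m → |f i| ≤ |f j|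
      · rw [hmu3 i ⟨him, hismin⟩]
      · push_neg at hismin
        obtain ⟨j, hjm, hjlt⟩ := hismin
        obtain ⟨o, ⟨hom, honei, hoabs⟩, _⟩ :=
          htwice i him ⟨j, hjm, hjlt⟩ ⟨pa, hpam, (habs_lt _ _).mp (by omega)⟩
        have hoeq : f o = f i := habs o i hom him hoabs
        have honat : (f o).natAbs = (f i).natAbs := (habs_eq _ _).mpr hoabs
        have hq : o / 2 < n := by omega
        set q := o / 2 with hqdef
        have hspq := hsp q hq
        have hbq := hblk q hq
        have hoc : o = 2*q ∨ o = 2*q+1 := by omega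
        obtain ⟨ob, hobm, hobsign, hobdist, hobrole⟩ :
            ∃ ob, ob < m ∧ (0 < f o ↔ 0 < f ob) ∧ ob ≠ o ∧
              ((o = 2*q ∧ ob = 2*q+1) ∨ (o = 2*q+1 ∧ ob = 2*q)) := by
          rcases hoc with h | h
          · exact ⟨2*q+1, by omega,
              by rw [h]; constructor <;> intro <;> rcases hspq with hh | hh <;> omega,
              by omega, Or.inl ⟨h, rfl⟩⟩
          · exact ⟨2*q, by omega,
              by rw [h]; constructor <;> intro <;> rcases hspq with hh | hh <;> omega,
              by omega, Or.inr ⟨h, rfl⟩⟩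
        have hobne : (f ob).natAbs ≠ (f o).natAbs := by
          intro hh
          have hfe : f ob = f o := habs ob o hobm hom ((habs_eq _ _).mp hh)
          rcases hobrole with ⟨h1, h2⟩ | ⟨h1, h2⟩
          · exact hN1 (2*q) (by omega) (by rw [← h2, ← h1]; exact hfe.symm)
          · exact hN1 (2*q) (by omega) (by rw [← h1, ← h2]; exact hfe)
        rcases Nat.lt_or_ge (f ob).natAbs (f o).natAbs with hlt2 | hge2
        · have hIH := IH ((f ob).natAbs) (by omega) ob hobm le_rfl
          have : 0 < f i ↔ 0 < f o := by rw [hoeq]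
          rw [this, hobsign]; exact hIH
        · exfalso
          have hpq : p ≠ q := by
            intro hpqe
            have hopa : o = pa := by
              rcases hparole with ⟨h1, h2⟩ | ⟨h1, h2⟩ <;> rcases hoc with h3 | h3 <;> omega
            rw [hopa] at honat
            exact hpane honat
          rcases lt_trichotomy (f i) 0 with hneg | h0 | hpos
          · -- negative: i = 2*p+1, o = 2*q+1
            have hi2 : i = 2*p+1 := by
              rcases hparole with ⟨h1, h2⟩ | ⟨h1, h2⟩
              · exfalso
                have e1 : (f i).natAbs = (f (2*p)).natAbs := by rw [h1]
                have e2 : (f pa).natAbs = (f (2*p+1)).natAbs := by rw [h2]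
                have e3 : f i = f (2*p) := by rw [h1]
                rcases hsppp with hh | hh <;> omega
              · exact h1
            have ho2 : o = 2*q+1 := by
              rcases hobrole with ⟨h1, h2⟩ | ⟨h1, h2⟩
              · exfalso
                have e1 : (f o).natAbs = (f (2*q)).natAbs := by rw [h1]
                have e2 : (f ob).natAbs = (f (2*q+1)).natAbs := by rw [h2]
                have e3 : f o = f (2*q) := by rw [h1]
                have hon : f o < 0 := by omega
                rcases hspq with hh | hh <;> omega
              · exact h1
            exact hLLneg p q hp hq hpq (by rw [← hi2]; exact hneg)
              (by rw [← hi2, ← ho2]; exact hoeq.symm)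
          · exact hnz i him h0
          · have hi2 : i = 2*p := by
              rcases hparole with ⟨h1, h2⟩ | ⟨h1, h2⟩
              · exact h1
              · exfalso
                have e1 : (f i).natAbs = (f (2*p+1)).natAbs := by rw [h1]
                have e2 : (f pa).natAbs = (f (2*p)).natAbs := by rw [h2]
                have e3 : f i = f (2*p+1) := by rw [h1]
                rcases hsppp with hh | hh <;> omega
            have ho2 : o = 2*q := by
              rcases hobrole with ⟨h1, h2⟩ | ⟨h1, h2⟩
              · exact h1
              · exfalso
                have e1 : (f o).natAbs = (f (2*q+1)).natAbs := by rw [h1]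
                have e2 : (f ob).natAbs = (f (2*q)).natAbs := by rw [h2]
                have e3 : f o = f (2*q+1) := by rw [h1]
                have hon : 0 < f o := by omega
                rcases hspq with hh | hh <;> omega
            exact hLLpos p q hp hq hpq (by rw [← hi2]; exact hpos)
              (by rw [← hi2, ← ho2]; exact hoeq.symm)
  have hallsign : ∀ i, i < m → (0 < f i ↔ 0 < f mu) :=
    fun i h => hsign (f i).natAbs i h le_rfl
  -- non-crossing machinery
  have hNC0 : ∀ a b c d, a < m → b < m → c < m → d < m → a < b → c < d →
      f a = f b → f c = f d → f a ≠ f c → Btwn a b c → Btwn a b d := by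
    intro a b c d ham hbm hcm hdm hab hcd e1 e2 hne hc
    have hca : a < c ∧ c < b := by unfold Btwn at hc; omega
    by_contra hd
    have hdnea : d ≠ a := fun hh => hne (by rw [e2, hh, e1])
    have hdneb : d ≠ b := fun hh => hne (by rw [e2, hh, ← e1])
    have hbd : b < d := by unfold Btwn at hd; omega
    exact hN3 a c b d (by omega) (by omega) (by omega) hdm ⟨e1, e2⟩
  have hNC0' : ∀ a b c d, a < m → b < m → c < m → d < m → a < b → c < d →
      f a = f b → f c = f d → f a ≠ f c → Btwn a b d → Btwn a b c := by
    intro a b c d ham hbm hcm hdm hab hcd e1 e2 hne hd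
    have hda : a < d ∧ d < b := by unfold Btwn at hd; omega
    by_contra hc
    have hcnea : c ≠ a := fun hh => hne (by rw [hh])
    have hcneb : c ≠ b := fun hh => hne (by rw [e1, ← hh])
    have hca : c < a := by unfold Btwn at hc; omega
    exact hN3 c a d b (by omega) (by omega) (by omega) hbm ⟨e2, e1⟩
  have hNC1 : ∀ a b c d, a < m → b < m → c < m → d < m → a < b → c ≠ d →
      f a = f b → f c = f d → f a ≠ f c → (Btwn a b c ↔ Btwn a b d) := by
    intro a b c d ham hbm hcm hdm hab hcd e1 e2 hne
    rcases Nat.lt_or_ge c d with h2 | h2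
    · exact ⟨hNC0 a b c d ham hbm hcm hdm hab h2 e1 e2 hne,
        hNC0' a b c d ham hbm hcm hdm hab h2 e1 e2 hne⟩
    · have h2' : d < c := by omega
      have hne' : f a ≠ f d := by rw [← e2]; exact hne
      exact ⟨hNC0' a b d c ham hbm hdm hcm hab h2' e1 e2.symm hne',
        hNC0 a b d c ham hbm hdm hcm hab h2' e1 e2.symm hne'⟩
  have hBtws : ∀ a b x, Btwn a b x ↔ Btwn b a x := by
    intro a b x; unfold Btwn; tauto
  have hNC : ∀ a b c d, a < m → b < m → c < m → d < m → a ≠ b → c ≠ d →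
      f a = f b → f c = f d → f a ≠ f c → (Btwn a b c ↔ Btwn a b d) := by
    intro a b c d ham hbm hcm hdm hab hcd e1 e2 hne
    rcases Nat.lt_or_ge a b with h1 | h1
    · exact hNC1 a b c d ham hbm hcm hdm h1 hcd e1 e2 hne
    · have h1' : b < a := by omega
      have hne' : f b ≠ f c := by rw [← e1]; exact hne
      rw [hBtws a b c, hBtws a b d]
      exact hNC1 b a c d hbm ham hcm hdm h1' hcd e1.symm e2 hne'
  have hrefl' : ∀ p q z, p < n → q < n → z < 2*n →
      (Btwn (2*p+1) (2*q) z ↔ Btwn (2*(n-1-p)) (2*(n-1-q)+1) (2*n-1-z)) := by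
    intro p q z hp hq hz; unfold Btwn; omega
  -- sign case split
  rcases lt_trichotomy (f mu) 0 with hmun | hmu0 | hmup
  · -- all negative
    have hneg : ∀ i, i < m → f i < 0 := by
      intro i h
      have h1 : ¬ 0 < f i := fun hp => absurd ((hallsign i h).mp hp) (by omega)
      have h2 := hnz i h
      omega
    refine core n (fun p => (f (2*(n-1-p)+1)).natAbs) (fun p => (f (2*(n-1-p))).natAbs) hn
      ?_ ?_ ?_ ?_ ?_ ?_ ?_ ?_
    · intro p hp
      have h1 := hblk (n-1-p) (by omega)
      have h2 := hneg (2*(n-1-p)+1) (by omega)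
      omega
    · intro p q hp hq ⟨hA, hB⟩
      exact hbet' (n-1-p) (by omega) (2*(n-1-q)+1) (by omega)
        (Or.inr ⟨(habs_lt _ _).mp hA, (habs_lt _ _).mp hB⟩)
    · intro p q hp hq he
      by_contra hne
      exact hLLneg (n-1-p) (n-1-q) (by omega) (by omega) (by omega)
        (hneg (2*(n-1-p)+1) (by omega))
        (habs _ _ (by omega) (by omega) ((habs_eq _ _).mp he))
    · intro p q hp hq he
      by_contra hne
      exact hHHneg (n-1-p) (n-1-q) (by omega) (by omega) (by omega)
        (hneg (2*(n-1-p)) (by omega))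
        (habs _ _ (by omega) (by omega) ((habs_eq _ _).mp he))
    · intro p hp hex
      obtain ⟨q, hq, hlt⟩ := hex
      have hbl := hblk (n-1-p) (by omega)
      have hs1 := hneg (2*(n-1-p)) (by omega)
      have hs2 := hneg (2*(n-1-p)+1) (by omega)
      obtain ⟨o, ⟨hom, hone, hoabs⟩, _⟩ :=
        htwice (2*(n-1-p)) (by omega)
          ⟨2*(n-1-p)+1, by omega, (habs_lt _ _).mp (by omega)⟩
          ⟨2*(n-1-q), by omega, (habs_lt _ _).mp hlt⟩
      have hb : o / 2 < n := by omega
      have hoc : o = 2*(o/2) ∨ o = 2*(o/2)+1 := by omega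
      rcases hoc with h | h
      · exfalso
        refine hHHneg (o/2) (n-1-p) hb (by omega) (fun hh => hone (by omega))
          (hneg (2*(o/2)) (by omega)) (habs _ _ (by omega) (by omega) ?_)
        rw [← h]; exact hoabs
      · refine ⟨n-1-(o/2), by omega, ?_⟩
        show (f (2*(n-1-(n-1-(o/2)))+1)).natAbs = (f (2*(n-1-p))).natAbs
        rw [show 2*(n-1-(n-1-(o/2)))+1 = o by omega]
        exact (habs_eq _ _).mpr hoabs
    · intro q hq hex
      obtain ⟨p', hp', hlt⟩ := hex
      have hbl := hblk (n-1-q) (by omega)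
      have hs1 := hneg (2*(n-1-q)) (by omega)
      have hs2 := hneg (2*(n-1-q)+1) (by omega)
      obtain ⟨o, ⟨hom, hone, hoabs⟩, _⟩ :=
        htwice (2*(n-1-q)+1) (by omega)
          ⟨2*(n-1-p')+1, by omega, (habs_lt _ _).mp hlt⟩
          ⟨2*(n-1-q), by omega, (habs_lt _ _).mp (by omega)⟩
      have hb : o / 2 < n := by omega
      have hoc : o = 2*(o/2) ∨ o = 2*(o/2)+1 := by omega
      rcases hoc with h | h
      · refine ⟨n-1-(o/2), by omega, ?_⟩
        show (f (2*(n-1-q)+1)).natAbs = (f (2*(n-1-(n-1-(o/2))))).natAbs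
        rw [show 2*(n-1-(n-1-(o/2))) = o by omega]
        exact ((habs_eq _ _).mpr hoabs).symm
      · exfalso
        refine hLLneg (o/2) (n-1-q) hb (by omega) (fun hh => hone (by omega))
          (hneg (2*(o/2)+1) (by omega)) (habs _ _ (by omega) (by omega) ?_)
        rw [← h]; exact hoabs
    · intro p hp1 he
      have hfe := habs (2*(n-1-(p+1))+1) (2*(n-1-p)) (by omega) (by omega)
        ((habs_eq _ _).mp he)
      refine hN1 (2*(n-1-(p+1))+1) (by omega) ?_
      rw [show 2*(n-1-(p+1))+1+1 = 2*(n-1-p) by omega]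
      exact hfe
    · intro p q p' q' hp hq hp' hq' l1 l2 lne
      have e1 : f (2*(n-1-p)) = f (2*(n-1-q)+1) :=
        (habs _ _ (by omega) (by omega) ((habs_eq _ _).mp l1)).symm
      have e2 : f (2*(n-1-p')) = f (2*(n-1-q')+1) :=
        (habs _ _ (by omega) (by omega) ((habs_eq _ _).mp l2)).symm
      have hfne : f (2*(n-1-p)) ≠ f (2*(n-1-p')) := fun hh => lne (by
        show (f (2*(n-1-p))).natAbs = (f (2*(n-1-p'))).natAbs
        rw [hh])
      have base := hNC (2*(n-1-p)) (2*(n-1-q)+1) (2*(n-1-p')) (2*(n-1-q')+1)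
        (by omega) (by omega) (by omega) (by omega) (by omega) (by omega) e1 e2 hfne
      have r1 := hrefl' p q (2*p'+1) hp hq (by omega)
      have r2 := hrefl' p q (2*q') hp hq (by omega)
      rw [show 2*n-1-(2*p'+1) = 2*(n-1-p') by omega] at r1
      rw [show 2*n-1-(2*q') = 2*(n-1-q')+1 by omega] at r2
      rw [r1, r2]
      exact base
  · exact hnz mu hmu1 hmu0
  · -- all positive
    have hpos : ∀ i, i < m → 0 < f i := fun i h => (hallsign i h).mpr hmup
    refine core n (fun p => (f (2*p)).natAbs) (fun p => (f (2*p+1)).natAbs) hn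
      ?_ ?_ ?_ ?_ ?_ ?_ ?_ ?_
    · intro p hp
      have h1 := hblk p hp
      have h2 := hpos (2*p) (by omega)
      omega
    · intro p q hp hq ⟨hA, hB⟩
      exact hbet' p hp (2*q) (by omega)
        (Or.inl ⟨(habs_lt _ _).mp hA, (habs_lt _ _).mp hB⟩)
    · intro p q hp hq he
      by_contra hne
      exact hLLpos p q hp hq hne (hpos (2*p) (by omega))
        (habs _ _ (by omega) (by omega) ((habs_eq _ _).mp he))
    · intro p q hp hq he
      by_contra hne
      exact hHHpos p q hp hq hne (hpos (2*p+1) (by omega))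
        (habs _ _ (by omega) (by omega) ((habs_eq _ _).mp he))
    · intro p hp hex
      obtain ⟨q, hq, hlt⟩ := hex
      have hbl := hblk p hp
      have hs1 := hpos (2*p) (by omega)
      obtain ⟨o, ⟨hom, hone, hoabs⟩, _⟩ :=
        htwice (2*p+1) (by omega)
          ⟨2*p, by omega, (habs_lt _ _).mp (by omega)⟩
          ⟨2*q+1, by omega, (habs_lt _ _).mp hlt⟩
      have hb : o / 2 < n := by omega
      have hoc : o = 2*(o/2) ∨ o = 2*(o/2)+1 := by omega
      rcases hoc with h | h
      · refine ⟨o/2, hb, ?_⟩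
        show (f (2*(o/2))).natAbs = (f (2*p+1)).natAbs
        rw [show 2*(o/2) = o by omega]
        exact (habs_eq _ _).mpr hoabs
      · exfalso
        refine hHHpos (o/2) p hb hp (fun hh => hone (by omega))
          (hpos (2*(o/2)+1) (by omega)) (habs _ _ (by omega) (by omega) ?_)
        rw [← h]; exact hoabs
    · intro q hq hex
      obtain ⟨p', hp', hlt⟩ := hex
      have hbl := hblk q hq
      have hs1 := hpos (2*q) (by omega)
      obtain ⟨o, ⟨hom, hone, hoabs⟩, _⟩ :=
        htwice (2*q) (by omega)
          ⟨2*p', by omega, (habs_lt _ _).mp hlt⟩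
          ⟨2*q+1, by omega, (habs_lt _ _).mp (by omega)⟩
      have hb : o / 2 < n := by omega
      have hoc : o = 2*(o/2) ∨ o = 2*(o/2)+1 := by omega
      rcases hoc with h | h
      · exfalso
        refine hLLpos (o/2) q hb hq (fun hh => hone (by omega))
          (hpos (2*(o/2)) (by omega)) (habs _ _ (by omega) (by omega) ?_)
        rw [← h]; exact hoabs
      · refine ⟨o/2, hb, ?_⟩
        show (f (2*q)).natAbs = (f (2*(o/2)+1)).natAbs
        rw [show 2*(o/2)+1 = o by omega]
        exact ((habs_eq _ _).mpr hoabs).symm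
    · intro p hp1 he
      have hfe := habs (2*(p+1)) (2*p+1) (by omega) (by omega) ((habs_eq _ _).mp he)
      refine hN1 (2*p+1) (by omega) ?_
      rw [show 2*p+1+1 = 2*(p+1) by omega]
      exact hfe.symm
    · intro p q p' q' hp hq hp' hq' l1 l2 lne
      have e1 : f (2*p+1) = f (2*q) :=
        (habs _ _ (by omega) (by omega) ((habs_eq _ _).mp l1)).symm
      have e2 : f (2*p'+1) = f (2*q') :=
        (habs _ _ (by omega) (by omega) ((habs_eq _ _).mp l2)).symm
      have hfne : f (2*p+1) ≠ f (2*p'+1) := fun hh => lne (by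
        show (f (2*p+1)).natAbs = (f (2*p'+1)).natAbs
        rw [hh])
      exact hNC (2*p+1) (2*q) (2*p'+1) (2*q') (by omega) (by omega) (by omega)
        (by omega) (by omega) (by omega) e1 e2 hfne

/-- a pointer list of length > 4 is not simultaneously a fixed
point of cde, cdr and cds. -/
theorem stmt5 (P : List ℤ) (hP : IsPointerList P) (hlen : 4 < P.length) :
    cde P ≠ P ∨ cdr P ≠ P ∨ cds P ≠ P := by
  by_contra hcon
  push_neg at hcon
  obtain ⟨h1, h2, h3⟩ := hcon
  have hN1 := N1_of_cde P h1
  have hN2 := N2_of_cdr P h2 hN1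
  have hN3 := N3_of_cds P h3 hN1
  obtain ⟨hev, hposlen, hmin, hmax, htw, hpair, hbet⟩ := hP
  exact main (fun i => P.getD i 0) P.length hlen hev hmin hmax htw hpair hbet hN1 hN2 hN3
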